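/- Let G : ℝ → ℝ be nondecreasing, with G integrable with respect to the standard Gaussian measure γ and with y ↦ y·G(y) integrable with respect to γ. If G is not γ-almost everywhere equal to a constant, then ∫ y·G(y) dγ(y) > 0; i.e. the first Hermite coefficient J_1(G) = E[η·G(η)] of a nonconstant nondecreasing subordinating function is strictly positive. -/

import Mathlib

open MeasureTheory ProbabilityTheory Real

lemma integrable_id_gaussian : Integrable (fun y : ℝ => y) (gaussianReal 0 1) := by
  rw [gaussianReal_of_var_ne_zero 0 one_ne_zero,
    integrable_withDensity_iff (measurable_gaussianPDF 0 1)
      (Filter.Eventually.of_forall fun _ => ENNReal.ofReal_lt_top)]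
  have hi : Integrable (fun x : ℝ => x * Real.exp (-(1/2 : ℝ) * x ^ 2)) :=
    integrable_mul_exp_neg_mul_sq (by norm_num)
  have h := hi.const_mul ((Real.sqrt (2 * π))⁻¹)
  refine h.congr (Filter.Eventually.of_forall fun x => ?_)
  simp only [gaussianPDF, gaussianPDFReal, NNReal.coe_one, mul_one, sub_zero]
  rw [ENNReal.toReal_ofReal (by positivity)]
  ring_nf

lemma integral_id_gaussian : ∫ y, y ∂(gaussianReal 0 1) = 0 := by
  have hmap : (gaussianReal 0 1).map (fun x : ℝ => (-1 : ℝ) * x) = gaussianReal 0 1 := by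
    have h1 : (⟨(-1:ℝ)^2, sq_nonneg _⟩ : NNReal) = 1 := by ext; norm_num
    rw [gaussianReal_map_const_mul (-1 : ℝ)]
    congr 1
    · norm_num
    · ext; norm_num
  have h2 : ∫ y, y ∂((gaussianReal 0 1).map (fun x : ℝ => (-1:ℝ) * x))
      = ∫ x, (-1:ℝ) * x ∂(gaussianReal 0 1) :=
    integral_map (by fun_prop) (by rw [hmap]; exact measurable_id.aestronglyMeasurable)
  rw [hmap] at h2
  simp only [neg_one_mul] at h2
  have h3 : ∫ x, -x ∂(gaussianReal 0 1) = - ∫ x, x ∂(gaussianReal 0 1) :=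
    integral_neg (fun x : ℝ => x)
  rw [h3] at h2
  linarith

/-- If `G` is nondecreasing, integrable against the standard Gaussian measure `γ` together
with `y ↦ y·G(y)`, and `G` is not `γ`-a.e. constant, then the first Hermite coefficient
`J₁(G) = ∫ y·G(y) dγ(y)` is strictly positive. -/
theorem stmt_4 (G : ℝ → ℝ) (hG : Monotone G)
    (hInt : Integrable G (gaussianReal 0 1))
    (hInt2 : Integrable (fun y => y * G y) (gaussianReal 0 1))
    (hnc : ¬ ∃ c : ℝ, G =ᵐ[gaussianReal 0 1] fun _ => c) :
    0 < ∫ y, y * G y ∂(gaussianReal 0 1) := by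
  set γ := gaussianReal 0 1
  have hid : Integrable (fun y : ℝ => y) γ := integrable_id_gaussian
  have hidc : Integrable (fun y : ℝ => y * G 0) γ := hid.mul_const _
  have hf : Integrable (fun y : ℝ => y * (G y - G 0)) γ := by
    have := hInt2.sub hidc
    apply this.congr
    filter_upwards with y
    simp only [Pi.sub_apply]
    ring
  have hnonneg : ∀ y : ℝ, 0 ≤ y * (G y - G 0) := by
    intro y
    rcases le_total 0 y with h | h
    · exact mul_nonneg h (sub_nonneg.mpr (hG h))
    · have := hG h; nlinarith
  have hsplit : ∫ y, y * G y ∂γ = ∫ y, y * (G y - G 0) ∂γ := by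
    have : ∫ y, y * (G y - G 0) ∂γ = ∫ y, y * G y ∂γ - ∫ y, y * G 0 ∂γ := by
      rw [← integral_sub hInt2 hidc]
      congr 1
      ext y
      ring
    rw [this, integral_mul_const, integral_id_gaussian]
    ring
  rw [hsplit]
  rcases (integral_nonneg (f := fun y : ℝ => y * (G y - G 0)) hnonneg).lt_or_eq with h | h
  · exact h
  exfalso
  have hzero : (fun y : ℝ => y * (G y - G 0)) =ᵐ[γ] 0 :=
    (integral_eq_zero_iff_of_nonneg hnonneg hf).mp h.symm
  have hne : ∀ᵐ y ∂γ, y ≠ 0 := by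
    have hac : γ ≪ volume := gaussianReal_absolutelyContinuous 0 one_ne_zero
    have : γ {(0:ℝ)} = 0 := hac (measure_singleton 0)
    exact (ae_iff).mpr (by simpa using this)
  apply hnc
  refine ⟨G 0, ?_⟩
  filter_upwards [hzero, hne] with y hy hy0
  have : G y - G 0 = 0 := by
    have := mul_eq_zero.mp hy
    tauto
  simpa [sub_eq_zero] using this
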